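/- Let G = (V,W) be a weighted graph with |V| = m and Laplacian L = D - W, with eigenvalues (listed in increasing order, with multiplicity) 0 = λ_1 < λ_2 ≤ λ_3 ≤ ... ≤ λ_m (so the underlying graph is connected). Let n be such that n + 1 ≤ m. Then the minimum of the energy E(R) = tr(Rᵀ L R) over all balanced orthogonal drawings R (m×n real matrices with Rᵀ R = I_n and 1ᵀ R = 0) exists and equals λ_2 + λ_3 + ... + λ_{n+1}; moreover, the m×n matrix R whose columns are any orthonormal eigenvectors u_2,...,u_{n+1} of L associated with λ_2 ≤ ... ≤ λ_{n+1} is a balanced orthogonal drawing achieving this minimum. -/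

import Mathlib

open Matrix

/-- Main theorem on spectral graph drawing: for a connected weighted graph
(`0 = λ₁ < λ₂ ≤ ... ≤ λₘ` the eigenvalues of the Laplacian `L`, with
orthonormal eigenvectors `u₁, ..., uₘ`), the minimal energy `tr(Rᵀ L R)` of a
balanced orthogonal drawing `R` in `ℝⁿ` (with `n + 1 ≤ m`) exists and equals
`λ₂ + ⋯ + λ_{n+1}`, and the matrix whose columns are `u₂, ..., u_{n+1}` is a
balanced orthogonal drawing achieving this minimum. -/
theorem stmt_8 {m n : ℕ} (hm : 2 ≤ m) (hn : n + 1 ≤ m)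
    (W : Matrix (Fin m) (Fin m) ℝ) (hsym : W.IsSymm)
    (hnonneg : ∀ i j, 0 ≤ W i j) (hdiag : ∀ i, W i i = 0)
    (L : Matrix (Fin m) (Fin m) ℝ)
    (hL : L = Matrix.diagonal (fun i => ∑ j, W i j) - W)
    (lam : Fin m → ℝ) (hmono : Monotone lam)
    (u : Fin m → Fin m → ℝ)
    (horth : ∀ i j, u i ⬝ᵥ u j = if i = j then (1 : ℝ) else 0)
    (heig : ∀ i, L *ᵥ u i = lam i • u i)
    (h0 : lam ⟨0, by omega⟩ = 0) (hconn : 0 < lam ⟨1, by omega⟩) :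
    IsLeast {E : ℝ | ∃ R : Matrix (Fin m) (Fin n) ℝ,
        Rᵀ * R = 1 ∧ (fun _ => (1 : ℝ)) ᵥ* R = 0 ∧ E = (Rᵀ * L * R).trace}
      (∑ j : Fin n, lam (Fin.castLE hn j.succ)) ∧
    ((Matrix.of fun (i : Fin m) (j : Fin n) => u (Fin.castLE hn j.succ) i)ᵀ *
        (Matrix.of fun (i : Fin m) (j : Fin n) => u (Fin.castLE hn j.succ) i) = 1 ∧
      (fun _ => (1 : ℝ)) ᵥ*
        (Matrix.of fun (i : Fin m) (j : Fin n) => u (Fin.castLE hn j.succ) i) = 0 ∧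
      ((Matrix.of fun (i : Fin m) (j : Fin n) => u (Fin.castLE hn j.succ) i)ᵀ * L *
        (Matrix.of fun (i : Fin m) (j : Fin n) => u (Fin.castLE hn j.succ) i)).trace =
        ∑ j : Fin n, lam (Fin.castLE hn j.succ)) := by
  have hm0 : 0 < m := by omega
  set z : Fin m := ⟨0, by omega⟩ with hz
  set o : Fin m → ℝ := fun _ => (1 : ℝ) with ho
  -- L is symmetric
  have hLsymm : Lᵀ = L := by
    rw [hL, Matrix.transpose_sub, Matrix.diagonal_transpose, hsym]
  -- L annihilates the all-ones vector
  have hLo : L *ᵥ o = 0 := by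
    have hsplit : L *ᵥ o = (Matrix.diagonal (fun i => ∑ j, W i j)) *ᵥ o - W *ᵥ o := by
      rw [hL, Matrix.sub_mulVec]
    funext i
    rw [hsplit]
    simp [Matrix.mulVec, dotProduct, ho, Matrix.diagonal_apply, Finset.sum_ite_eq]
  -- eigenvalues are nonnegative
  have hlamnn : ∀ i, 0 ≤ lam i := by
    intro i
    rw [← h0]
    exact hmono (show z ≤ i from Fin.le_def.mpr (Nat.zero_le _))
  -- positivity of eigenvalues with positive index
  have hlampos : ∀ i : Fin m, 0 < i.val → 0 < lam i := by
    intro i hi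
    exact lt_of_lt_of_le hconn (hmono (by simp [Fin.le_def]; omega))
  -- the all-ones vector is orthogonal to eigenvectors of nonzero eigenvalue
  have hkey : ∀ k : Fin m, lam k ≠ 0 → o ⬝ᵥ u k = 0 := by
    intro k hk
    have h1 : lam k * (o ⬝ᵥ u k) = 0 := by
      calc lam k * (o ⬝ᵥ u k) = o ⬝ᵥ (lam k • u k) := by
              rw [dotProduct_smul]; rfl
        _ = o ⬝ᵥ (L *ᵥ u k) := by rw [heig k]
        _ = (o ᵥ* L) ⬝ᵥ u k := dotProduct_mulVec o L (u k)
        _ = (L *ᵥ o) ⬝ᵥ u k := by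
              nth_rewrite 1 [← hLsymm]; rw [Matrix.vecMul_transpose]
        _ = 0 := by rw [hLo]; simp
    exact (mul_eq_zero.mp h1).resolve_left hk
  -- the candidate drawing
  set R₀ : Matrix (Fin m) (Fin n) ℝ :=
    Matrix.of fun (i : Fin m) (j : Fin n) => u (Fin.castLE hn j.succ) i with hR₀
  have hcinj : Function.Injective (fun j : Fin n => Fin.castLE hn j.succ) := by
    intro a b hab
    simpa using (Fin.castLE_injective hn hab)
  -- R₀ is orthogonal
  have hR₀orth : R₀ᵀ * R₀ = 1 := by
    ext j k
    simp only [Matrix.mul_apply, Matrix.transpose_apply, hR₀, Matrix.of_apply,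
      Matrix.one_apply]
    rw [show (∑ i, u (Fin.castLE hn j.succ) i * u (Fin.castLE hn k.succ) i)
        = u (Fin.castLE hn j.succ) ⬝ᵥ u (Fin.castLE hn k.succ) from rfl, horth]
    by_cases h : j = k
    · simp [h]
    · simp [h, fun hc => h (hcinj hc)]
  -- R₀ is balanced
  have hR₀bal : o ᵥ* R₀ = 0 := by
    funext j
    have : o ⬝ᵥ u (Fin.castLE hn j.succ) = 0 :=
      hkey _ (hlampos _ (Nat.succ_pos j.val)).ne'
    simpa [Matrix.vecMul, hR₀, dotProduct] using this
  -- energy of R₀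
  have hR₀energy : (R₀ᵀ * L * R₀).trace = ∑ j : Fin n, lam (Fin.castLE hn j.succ) := by
    rw [Matrix.trace]
    apply Finset.sum_congr rfl
    intro j _
    have hLR : ∀ i, (L * R₀) i j = lam (Fin.castLE hn j.succ) * u (Fin.castLE hn j.succ) i := by
      intro i
      have := congrFun (heig (Fin.castLE hn j.succ)) i
      simpa [Matrix.mul_apply, Matrix.mulVec, dotProduct, hR₀] using this
    rw [Matrix.mul_assoc]
    simp only [Matrix.diag_apply, Matrix.mul_apply, Matrix.transpose_apply, hR₀,
      Matrix.of_apply]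
    calc (∑ i, u (Fin.castLE hn j.succ) i * (L * R₀) i j)
        = ∑ i, lam (Fin.castLE hn j.succ) *
            (u (Fin.castLE hn j.succ) i * u (Fin.castLE hn j.succ) i) := by
          apply Finset.sum_congr rfl; intro i _; rw [hLR i]; ring
      _ = lam (Fin.castLE hn j.succ) *
            (u (Fin.castLE hn j.succ) ⬝ᵥ u (Fin.castLE hn j.succ)) := by
          rw [← Finset.mul_sum]; rfl
      _ = lam (Fin.castLE hn j.succ) := by rw [horth]; simp
  refine ⟨⟨⟨R₀, hR₀orth, hR₀bal, hR₀energy.symm⟩, ?_⟩, hR₀orth, hR₀bal, hR₀energy⟩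
  -- lower bound
  rintro E ⟨R, hRorth, hRbal, rfl⟩
  set U : Matrix (Fin m) (Fin m) ℝ := Matrix.of fun i k => u k i with hU
  have hUtU : Uᵀ * U = 1 := by
    ext k l
    simp only [Matrix.mul_apply, Matrix.transpose_apply, hU, Matrix.of_apply,
      Matrix.one_apply]
    rw [show (∑ i, u k i * u l i) = u k ⬝ᵥ u l from rfl, horth]
  have hUUt : U * Uᵀ = 1 := mul_eq_one_comm.mp hUtU
  set A : Matrix (Fin m) (Fin n) ℝ := Uᵀ * R with hA
  have hAtA : Aᵀ * A = 1 := by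
    rw [hA, Matrix.transpose_mul, Matrix.transpose_transpose, Matrix.mul_assoc,
      ← Matrix.mul_assoc U, hUUt, Matrix.one_mul, hRorth]
  -- expansion in the eigenbasis
  have hexp : ∀ x : Fin m → ℝ, ∀ i, x i = ∑ k, (u k ⬝ᵥ x) * u k i := by
    intro x i
    have h1 : (U *ᵥ (Uᵀ *ᵥ x)) i = x i := by
      rw [Matrix.mulVec_mulVec, hUUt, Matrix.one_mulVec]
    calc x i = (U *ᵥ (Uᵀ *ᵥ x)) i := h1.symm
      _ = ∑ k, (u k ⬝ᵥ x) * u k i := by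
          simp only [Matrix.mulVec, dotProduct, hU, Matrix.of_apply,
            Matrix.transpose_apply]
          apply Finset.sum_congr rfl
          intro k _
          ring
  -- the ones vector is proportional to u z
  have hoz : ∀ i, o i = (u z ⬝ᵥ o) * u z i := by
    intro i
    rw [hexp o i, Finset.sum_eq_single z]
    · intro k _ hk
      have hk' : 0 < k.val := by
        rcases Nat.eq_zero_or_pos k.val with h | h
        · exact absurd (Fin.ext h : k = z) hk
        · exact h
      rw [dotProduct_comm, hkey k (hlampos k hk').ne', zero_mul]
    · intro h; exact absurd (Finset.mem_univ z) h
  have hc0 : (u z ⬝ᵥ o) ≠ 0 := by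
    intro hcc
    have h1 : o z = 0 := by rw [hoz z, hcc, zero_mul]
    simp [ho] at h1
  have huz : ∀ i, u z i = (u z ⬝ᵥ o)⁻¹ * o i := by
    intro i
    rw [hoz i]
    field_simp
  -- row z of A vanishes
  have hA0 : ∀ j, A z j = 0 := by
    intro j
    have hcol : ∑ i, R i j = 0 := by
      have := congrFun hRbal j
      simpa [Matrix.vecMul, dotProduct, ho] using this
    rw [hA]
    simp only [Matrix.mul_apply, Matrix.transpose_apply, hU, Matrix.of_apply]
    calc (∑ i, u z i * R i j) = ∑ i, (u z ⬝ᵥ o)⁻¹ * R i j := by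
          apply Finset.sum_congr rfl
          intro i _
          rw [huz i]
          simp [ho]
      _ = (u z ⬝ᵥ o)⁻¹ * ∑ i, R i j := by rw [Finset.mul_sum]
      _ = 0 := by rw [hcol, mul_zero]
  -- diagonalization of L
  have hLU : L * U = U * Matrix.diagonal lam := by
    ext i k
    rw [Matrix.mul_diagonal]
    have h1 := congrFun (heig k) i
    simp only [Matrix.mulVec, dotProduct, Pi.smul_apply, smul_eq_mul] at h1
    simp only [Matrix.mul_apply, hU, Matrix.of_apply]
    rw [h1]
    ring
  have hLdec : L = U * Matrix.diagonal lam * Uᵀ := by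
    calc L = L * (U * Uᵀ) := by rw [hUUt, Matrix.mul_one]
      _ = (L * U) * Uᵀ := by rw [Matrix.mul_assoc]
      _ = U * Matrix.diagonal lam * Uᵀ := by rw [hLU]
  set P : Matrix (Fin m) (Fin m) ℝ := A * Aᵀ with hP
  have henergy : (Rᵀ * L * R).trace = ∑ i, lam i * P i i := by
    have h1 : Rᵀ * L * R = Aᵀ * (Matrix.diagonal lam * A) := by
      rw [hLdec, hA, Matrix.transpose_mul, Matrix.transpose_transpose]
      simp only [Matrix.mul_assoc]
    rw [h1, Matrix.trace_mul_comm, Matrix.mul_assoc, ← hP, Matrix.trace]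
    apply Finset.sum_congr rfl
    intro i _
    simp [Matrix.diag_apply, Matrix.diagonal_mul]
  have hPsymm : Pᵀ = P := by
    rw [hP, Matrix.transpose_mul, Matrix.transpose_transpose]
  have hPP : P * P = P := by
    rw [hP, Matrix.mul_assoc, ← Matrix.mul_assoc Aᵀ, hAtA, Matrix.one_mul]
  have hPnn : ∀ i, 0 ≤ P i i := by
    intro i
    rw [hP, Matrix.mul_apply]
    apply Finset.sum_nonneg
    intro k _
    simp only [Matrix.transpose_apply]
    exact mul_self_nonneg _
  have hPle : ∀ i, P i i ≤ 1 := by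
    intro i
    have h2 : P i i = ∑ k, (P i k) ^ 2 := by
      conv_lhs => rw [← hPP]
      rw [Matrix.mul_apply]
      apply Finset.sum_congr rfl
      intro k _
      rw [show P k i = Pᵀ i k from rfl, hPsymm]
      ring
    have h3 : (P i i) ^ 2 ≤ ∑ k, (P i k) ^ 2 :=
      Finset.single_le_sum (f := fun k => (P i k) ^ 2)
        (fun k _ => sq_nonneg _) (Finset.mem_univ i)
    nlinarith [hPnn i]
  have hPtr : ∑ i, P i i = (n : ℝ) := by
    have h1 : P.trace = (1 : Matrix (Fin n) (Fin n) ℝ).trace := by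
      rw [hP, Matrix.trace_mul_comm, hAtA]
    simpa [Matrix.trace, Matrix.diag_apply, Matrix.trace_one] using h1
  have hPz : P z z = 0 := by
    rw [hP, Matrix.mul_apply]
    apply Finset.sum_eq_zero
    intro k _
    simp [hA0 k]
  -- the majorization argument
  set c : ℝ := lam ⟨n, by omega⟩ with hcdef
  set S : Finset (Fin m) := Finset.image (fun j : Fin n => Fin.castLE hn j.succ)
    Finset.univ with hS
  have hmemS : ∀ i : Fin m, i ∈ S ↔ 1 ≤ i.val ∧ i.val ≤ n := by
    intro i
    constructor
    · intro hi
      rcases Finset.mem_image.mp hi with ⟨j, _, rfl⟩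
      exact ⟨Nat.succ_le_of_lt (Nat.zero_lt_succ _), Nat.succ_le_of_lt j.isLt⟩
    · intro ⟨h1, h2⟩
      apply Finset.mem_image.mpr
      refine ⟨⟨i.val - 1, by omega⟩, Finset.mem_univ _, ?_⟩
      apply Fin.ext
      simp [Fin.castLE]
      omega
  have hsumS : ∑ i ∈ S, lam i = ∑ j : Fin n, lam (Fin.castLE hn j.succ) :=
    Finset.sum_image (fun a _ b _ h => hcinj h)
  have hcard : S.card = n := by
    rw [hS, Finset.card_image_of_injective _ hcinj, Finset.card_univ,
      Fintype.card_fin]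
  have hstep1 : ∀ i ∈ S, lam i - c ≤ (lam i - c) * P i i := by
    intro i hi
    have h1 : lam i ≤ c := hmono (by rw [Fin.le_def]; exact ((hmemS i).1 hi).2)
    nlinarith [hPle i, hPnn i]
  have hstep2 : ∀ i ∈ Sᶜ, (0 : ℝ) ≤ (lam i - c) * P i i := by
    intro i hi
    rw [Finset.mem_compl, hmemS] at hi
    push_neg at hi
    by_cases h1 : i.val = 0
    · have hiz : i = z := Fin.ext h1
      rw [hiz, hPz, mul_zero]
    · have h2 : n ≤ i.val := by
        rcases Nat.lt_or_ge i.val (n + 1) with h | h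
        · omega
        · omega
      have h3 : c ≤ lam i := hmono (by rw [Fin.le_def]; exact h2)
      exact mul_nonneg (by linarith) (hPnn i)
  have key1 : ∑ i, lam i * P i i = ∑ i, (lam i - c) * P i i + c * (n : ℝ) := by
    rw [← hPtr, Finset.mul_sum, ← Finset.sum_add_distrib]
    apply Finset.sum_congr rfl
    intro i _
    ring
  have key2 : ∑ i ∈ S, (lam i - c) * P i i + ∑ i ∈ Sᶜ, (lam i - c) * P i i
      = ∑ i, (lam i - c) * P i i := Finset.sum_add_sum_compl S _
  have key3 : ∑ i ∈ S, (lam i - c) ≤ ∑ i ∈ S, (lam i - c) * P i i :=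
    Finset.sum_le_sum hstep1
  have key4 : (0 : ℝ) ≤ ∑ i ∈ Sᶜ, (lam i - c) * P i i :=
    Finset.sum_nonneg hstep2
  have key5 : ∑ i ∈ S, (lam i - c) = ∑ i ∈ S, lam i - c * n := by
    rw [Finset.sum_sub_distrib, Finset.sum_const, hcard, nsmul_eq_mul]
    ring
  rw [henergy, ← hsumS]
  linarith
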